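/- Let X = [0,1]^d, (u^n)_{n≥0} a (t,d)-sequence in base b ≥ 2, and K : X → P(X) a Markov kernel satisfying Assumptions A1 and A2. Then there exist δ̄_K > 0, a map δ ↦ k_δ ∈ ℕ on (0, δ̄_K] with k_δ ≥ t + d, and a continuous strictly increasing function v_K : (0, δ̄_K] → (0,∞) with v_K(δ) → 0 as δ → 0 — all independent of the pair (x̃, x') ∈ X² — such that for every δ ∈ (0, δ̄_K], every (x̃, x') ∈ X², every a ∈ ℕ, and every choice of points x^n ∈ B_{v_K(δ)}(x̃) for a b^{k_δ} ≤ n < (a+1) b^{k_δ}, the point set {F_K^{-1}(x^n, u^n) : a b^{k_δ} ≤ n < (a+1) b^{k_δ}} contains at least b^t points in B_δ(x'). In particular, this holds when x^n = x̃ for all n. -/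

import Mathlib

open MeasureTheory ProbabilityTheory Set Filter
open scoped Classical
set_option maxHeartbeats 1000000

/-- The closed unit cube `[0,1]^d` in `ℝ^d` (modeled as `Fin d → ℝ` with the sup norm). -/
def cube (d : ℕ) : Set (Fin d → ℝ) := {x | ∀ i, x i ∈ Set.Icc (0:ℝ) 1}

/-- Membership in the `b`-ary box `∏_j [c_j b^{-e_j}, (c_j+1) b^{-e_j})`. -/
def inBaryBox {d : ℕ} (b : ℕ) (e c : Fin d → ℕ) (x : Fin d → ℝ) : Prop :=
  ∀ j, (c j : ℝ) / (b : ℝ) ^ (e j) ≤ x j ∧ x j < ((c j : ℝ) + 1) / (b : ℝ) ^ (e j)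

/-- The block `{u^n : A ≤ n < A + b^m}` is a `(t,m,d)`-net in base `b`: every `b`-ary box of
volume `b^{t-m}` contains exactly `b^t` points of the block. -/
def IsNetBlock {d : ℕ} (b t m : ℕ) (u : ℕ → Fin d → ℝ) (A : ℕ) : Prop :=
  ∀ e c : Fin d → ℕ, (∀ j, c j < b ^ (e j)) → (∑ j, e j) = m - t →
    ((Finset.Ico A (A + b ^ m)).filter (fun n => inBaryBox b e c (u n))).card = b ^ t

/-- `(u^n)_{n≥0}` is a `(t,d)`-sequence in base `b`. -/
def IsTSeq {d : ℕ} (b t : ℕ) (u : ℕ → Fin d → ℝ) : Prop :=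
  (∀ n i, u n i ∈ Set.Ico (0:ℝ) 1) ∧
  ∀ a m : ℕ, t ≤ m → IsNetBlock b t m u (a * b ^ m)

/-- `(v^n)_{n≥0}` is a scalar `(t,1)`-sequence in base `b`. -/
def IsTSeq1 (b t : ℕ) (v : ℕ → ℝ) : Prop :=
  (∀ n, v n ∈ Set.Ico (0:ℝ) 1) ∧
  ∀ a m : ℕ, t ≤ m → ∀ c : ℕ, c < b ^ (m - t) →
    ((Finset.Ico (a * b ^ m) (a * b ^ m + b ^ m)).filter
      (fun n => (c : ℝ) / (b:ℝ) ^ (m - t) ≤ v n ∧ v n < ((c : ℝ) + 1) / (b:ℝ) ^ (m - t))).card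
      = b ^ t

/-- `k_n`: the smallest integer `k` such that `n < b^k`. -/
noncomputable def kOf (b n : ℕ) : ℕ := sInf {k | n < b ^ k}

section Rosenblatt

variable {d : ℕ}

/-- Marginal of the density `κ(·|x)` over the first `i` coordinates: the first `i` coordinates
are fixed to those of `y`, the remaining ones are integrated out over the unit cube. -/
noncomputable def marg (κ : (Fin d → ℝ) → (Fin d → ℝ) → ℝ) (i : ℕ) (x y : Fin d → ℝ) : ℝ :=
  ∫ z in cube d, κ x (fun j => if (j : ℕ) < i then y j else z j)

/-- `K_i(y_i | y_{1:i-1}, x)`: the `i`-th conditional density of the kernel density `κ`. -/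
noncomputable def condDensity (κ : (Fin d → ℝ) → (Fin d → ℝ) → ℝ) (i : Fin d)
    (x y : Fin d → ℝ) : ℝ :=
  marg κ ((i : ℕ) + 1) x y / marg κ (i : ℕ) x y

/-- `F_{K_i}(s | x, y_{1:i-1})`: the `i`-th conditional CDF of the kernel density `κ`. -/
noncomputable def condCDF' (κ : (Fin d → ℝ) → (Fin d → ℝ) → ℝ) (i : Fin d)
    (x y : Fin d → ℝ) (s : ℝ) : ℝ :=
  ∫ r in (0:ℝ)..s, condDensity κ i x (Function.update y i r)

/-- The Rosenblatt transform `F_K(x,·)` of the kernel with density `κ`. -/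
noncomputable def Ros (κ : (Fin d → ℝ) → (Fin d → ℝ) → ℝ) (x y : Fin d → ℝ) : Fin d → ℝ :=
  fun i => condCDF' κ i x y (y i)

/-- Assumption (A1): each conditional CDF is strictly increasing in its main argument. -/
def A1 (κ : (Fin d → ℝ) → (Fin d → ℝ) → ℝ) : Prop :=
  ∀ x ∈ cube d, ∀ y ∈ cube d, ∀ i : Fin d,
    StrictMonoOn (fun s => condCDF' κ i x y s) (Set.Icc (0:ℝ) 1)

/-- Assumption (A2): the density `κ` is continuous on `X²` and bounded below by `Klow > 0`. -/
def A2 (κ : (Fin d → ℝ) → (Fin d → ℝ) → ℝ) (Klow : ℝ) : Prop :=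
  ContinuousOn (fun p : (Fin d → ℝ) × (Fin d → ℝ) => κ p.1 p.2) ((cube d) ×ˢ (cube d)) ∧
  0 < Klow ∧ ∀ x ∈ cube d, ∀ y ∈ cube d, Klow ≤ κ x y

/-- `κ` is a probability density in its second argument, w.r.t. Lebesgue measure on the cube. -/
def IsMarkovDensity (κ : (Fin d → ℝ) → (Fin d → ℝ) → ℝ) : Prop :=
  ∀ x ∈ cube d, (∀ y ∈ cube d, 0 ≤ κ x y) ∧ ∫ y in cube d, κ x y = 1

/-- `G` is the inverse Rosenblatt transform associated with `κ`. -/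
def IsInvRos (κ : (Fin d → ℝ) → (Fin d → ℝ) → ℝ)
    (G : (Fin d → ℝ) → (Fin d → ℝ) → (Fin d → ℝ)) : Prop :=
  ∀ x ∈ cube d, ∀ u : Fin d → ℝ, (∀ i, u i ∈ Set.Icc (0:ℝ) 1) →
    G x u ∈ cube d ∧ Ros κ x (G x u) = u

/-- The sup-norm ball `B_δ(x)` of radius `δ` around `x`, intersected with the cube. -/
def ball' {d : ℕ} (δ : ℝ) (x : Fin d → ℝ) : Set (Fin d → ℝ) :=
  {y ∈ cube d | ‖y - x‖ ≤ δ}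

end Rosenblatt

section basics
variable {d : ℕ}

lemma cube_eq : cube d = Set.pi Set.univ (fun _ => Set.Icc (0:ℝ) 1) := by
  ext x
  simp only [cube, Set.mem_setOf_eq, Set.mem_pi, Set.mem_univ, forall_true_left]

lemma isCompact_cube : IsCompact (cube d) := by
  rw [cube_eq]; exact isCompact_univ_pi fun _ => isCompact_Icc

lemma measurableSet_cube : MeasurableSet (cube d) := by
  rw [cube_eq]; exact MeasurableSet.univ_pi fun _ => measurableSet_Icc

lemma volume_cube : volume (cube d) = 1 := by
  rw [cube_eq, volume_pi_pi]
  simp [Real.volume_Icc]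

lemma zero_mem_cube : (fun _ => (0:ℝ)) ∈ cube d := by
  intro i; exact ⟨le_refl _, zero_le_one⟩

lemma cube_nonempty : (cube d).Nonempty := ⟨_, zero_mem_cube⟩

end basics

section margsec
variable {d : ℕ} {κ : (Fin d → ℝ) → (Fin d → ℝ) → ℝ} {Klow Kup : ℝ}

lemma mix_mem {i : ℕ} {y z : Fin d → ℝ} (hy : y ∈ cube d) (hz : z ∈ cube d) :
    (fun j : Fin d => if (j : ℕ) < i then y j else z j) ∈ cube d := by
  intro j; by_cases h : (j:ℕ) < i <;> simp [h, hy j, hz j]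

lemma continuousOn_mix
    (hcont : ContinuousOn (fun p : (Fin d → ℝ) × (Fin d → ℝ) => κ p.1 p.2) ((cube d) ×ˢ (cube d)))
    {i : ℕ} {x y : Fin d → ℝ} (hx : x ∈ cube d) (hy : y ∈ cube d) :
    ContinuousOn (fun z : Fin d → ℝ => κ x (fun j => if (j : ℕ) < i then y j else z j)) (cube d) := by
  have hc : Continuous (fun z : Fin d → ℝ =>
      ((x, fun j : Fin d => if (j : ℕ) < i then y j else z j) : (Fin d → ℝ) × (Fin d → ℝ))) := by
    refine continuous_const.prodMk (continuous_pi fun j => ?_)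
    by_cases h : (j:ℕ) < i
    · simp only [h, if_true]; exact continuous_const
    · simp only [h, if_false]; exact continuous_apply j
  exact hcont.comp hc.continuousOn (fun z hz => ⟨hx, mix_mem hy hz⟩)

lemma integrableOn_mix
    (hcont : ContinuousOn (fun p : (Fin d → ℝ) × (Fin d → ℝ) => κ p.1 p.2) ((cube d) ×ˢ (cube d)))
    {i : ℕ} {x y : Fin d → ℝ} (hx : x ∈ cube d) (hy : y ∈ cube d) :
    IntegrableOn (fun z : Fin d → ℝ => κ x (fun j => if (j : ℕ) < i then y j else z j)) (cube d) :=
  (continuousOn_mix hcont hx hy).integrableOn_compact isCompact_cube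

lemma marg_lb
    (hcont : ContinuousOn (fun p : (Fin d → ℝ) × (Fin d → ℝ) => κ p.1 p.2) ((cube d) ×ˢ (cube d)))
    (hlow : ∀ x ∈ cube d, ∀ y ∈ cube d, Klow ≤ κ x y)
    {i : ℕ} {x y : Fin d → ℝ} (hx : x ∈ cube d) (hy : y ∈ cube d) :
    Klow ≤ marg κ i x y := by
  have h1 : (∫ _z in cube d, Klow) ≤ marg κ i x y := by
    refine setIntegral_mono_on (integrableOn_const ?_) (integrableOn_mix hcont hx hy)
      measurableSet_cube ?_
    · rw [volume_cube]; exact ENNReal.one_ne_top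
    · intro z hz; exact hlow x hx _ (mix_mem hy hz)
  rwa [setIntegral_const, measureReal_def, volume_cube, ENNReal.toReal_one, one_smul] at h1

lemma marg_ub
    (hcont : ContinuousOn (fun p : (Fin d → ℝ) × (Fin d → ℝ) => κ p.1 p.2) ((cube d) ×ˢ (cube d)))
    (hup : ∀ x ∈ cube d, ∀ y ∈ cube d, κ x y ≤ Kup)
    {i : ℕ} {x y : Fin d → ℝ} (hx : x ∈ cube d) (hy : y ∈ cube d) :
    marg κ i x y ≤ Kup := by
  have h1 : marg κ i x y ≤ (∫ _z in cube d, Kup) := by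
    refine setIntegral_mono_on (integrableOn_mix hcont hx hy) (integrableOn_const ?_)
      measurableSet_cube ?_
    · rw [volume_cube]; exact ENNReal.one_ne_top
    · intro z hz; exact hup x hx _ (mix_mem hy hz)
  rwa [setIntegral_const, measureReal_def, volume_cube, ENNReal.toReal_one, one_smul] at h1

lemma marg_congr {i : ℕ} {x y y' : Fin d → ℝ} (h : ∀ j : Fin d, (j:ℕ) < i → y j = y' j) :
    marg κ i x y = marg κ i x y' := by
  unfold marg
  refine setIntegral_congr_fun measurableSet_cube (fun z _ => ?_)
  congr 1; funext j; by_cases hj : (j:ℕ) < i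
  · simp [hj, h j hj]
  · simp [hj]

lemma marg_diff
    (hcont : ContinuousOn (fun p : (Fin d → ℝ) × (Fin d → ℝ) => κ p.1 p.2) ((cube d) ×ˢ (cube d)))
    {ε η : ℝ}
    (hκη : ∀ p ∈ (cube d) ×ˢ (cube d), ∀ q ∈ (cube d) ×ˢ (cube d),
      dist p q ≤ η → |κ p.1 p.2 - κ q.1 q.2| ≤ ε)
    {i : ℕ} {x y x' y' : Fin d → ℝ} (hx : x ∈ cube d) (hy : y ∈ cube d)
    (hx' : x' ∈ cube d) (hy' : y' ∈ cube d)
    (hdx : dist x x' ≤ η) (hdy : dist y y' ≤ η) :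
    |marg κ i x y - marg κ i x' y'| ≤ ε := by
  have hηnn : (0:ℝ) ≤ η := le_trans dist_nonneg hdx
  have hdiff : ∀ z ∈ cube d,
      ‖κ x (fun j : Fin d => if (j : ℕ) < i then y j else z j)
        - κ x' (fun j : Fin d => if (j : ℕ) < i then y' j else z j)‖ ≤ ε := by
    intro z hz
    have hmd : dist (fun j : Fin d => if (j : ℕ) < i then y j else z j)
        (fun j : Fin d => if (j : ℕ) < i then y' j else z j) ≤ η := by
      rw [dist_pi_le_iff hηnn]
      intro j
      by_cases hj : (j:ℕ) < i
      · simp only [hj, if_true]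
        exact le_trans (dist_le_pi_dist y y' j) hdy
      · simp [hj, hηnn]
    have := hκη (x, _) ⟨hx, mix_mem hy hz⟩ (x', _) ⟨hx', mix_mem hy' hz⟩
      (by rw [Prod.dist_eq]; exact max_le hdx hmd)
    rw [Real.norm_eq_abs]; exact this
  have hkey : ‖∫ z in cube d, (κ x (fun j : Fin d => if (j : ℕ) < i then y j else z j)
      - κ x' (fun j : Fin d => if (j : ℕ) < i then y' j else z j))‖
      ≤ ε * (volume (cube d)).toReal := by
    refine norm_setIntegral_le_of_norm_le_const_ae' ?_
      (Filter.Eventually.of_forall hdiff)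
    rw [volume_cube]; exact ENNReal.one_lt_top
  rw [integral_sub (integrableOn_mix hcont hx hy) (integrableOn_mix hcont hx' hy')] at hkey
  rw [volume_cube, ENNReal.toReal_one, mul_one] at hkey
  exact le_trans (le_of_eq (by rw [Real.norm_eq_abs] at hkey; rfl)) hkey

end margsec

section cdfsec
variable {d : ℕ} {κ : (Fin d → ℝ) → (Fin d → ℝ) → ℝ} {Klow Kup : ℝ}

lemma update_mem_cube {i : Fin d} {y : Fin d → ℝ} {r : ℝ} (hy : y ∈ cube d)
    (hr : r ∈ Set.Icc (0:ℝ) 1) : Function.update y i r ∈ cube d := by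
  intro j
  rcases eq_or_ne j i with h | h
  · subst h; simp [hr]
  · simp [Function.update_of_ne h, hy j]

lemma dist_update_le {i : Fin d} {y : Fin d → ℝ} {r r' : ℝ} :
    dist (Function.update y i r) (Function.update y i r') ≤ dist r r' := by
  rw [dist_pi_le_iff dist_nonneg]
  intro j
  rcases eq_or_ne j i with h | h
  · subst h; simp
  · simp [Function.update_of_ne h, dist_nonneg]

lemma dist_update_update_le {i : Fin d} {y y' : Fin d → ℝ} {r : ℝ} :
    dist (Function.update y i r) (Function.update y' i r) ≤ dist y y' := by
  rw [dist_pi_le_iff dist_nonneg]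
  intro j
  rcases eq_or_ne j i with h | h
  · subst h; simp [dist_nonneg]
  · simpa [Function.update_of_ne h] using dist_le_pi_dist y y' j

lemma condDensity_lb
    (hcont : ContinuousOn (fun p : (Fin d → ℝ) × (Fin d → ℝ) => κ p.1 p.2) ((cube d) ×ˢ (cube d)))
    (hlow : ∀ x ∈ cube d, ∀ y ∈ cube d, Klow ≤ κ x y)
    (hup : ∀ x ∈ cube d, ∀ y ∈ cube d, κ x y ≤ Kup) (h0 : 0 < Klow)
    {i : Fin d} {x y : Fin d → ℝ} (hx : x ∈ cube d) (hy : y ∈ cube d) :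
    Klow / Kup ≤ condDensity κ i x y := by
  have h1 := marg_lb hcont hlow hx hy (i := (i:ℕ)+1)
  have h2 := marg_ub hcont hup hx hy (i := (i:ℕ))
  have h3 := marg_lb hcont hlow hx hy (i := (i:ℕ))
  have h4 := marg_ub hcont hup hx hy (i := (i:ℕ)+1)
  have hKup : 0 < Kup := lt_of_lt_of_le h0 (le_trans h3 h2)
  exact div_le_div₀ (le_trans h0.le h1) h1 (lt_of_lt_of_le h0 h3) h2

lemma condDensity_ub
    (hcont : ContinuousOn (fun p : (Fin d → ℝ) × (Fin d → ℝ) => κ p.1 p.2) ((cube d) ×ˢ (cube d)))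
    (hlow : ∀ x ∈ cube d, ∀ y ∈ cube d, Klow ≤ κ x y)
    (hup : ∀ x ∈ cube d, ∀ y ∈ cube d, κ x y ≤ Kup) (h0 : 0 < Klow)
    {i : Fin d} {x y : Fin d → ℝ} (hx : x ∈ cube d) (hy : y ∈ cube d) :
    condDensity κ i x y ≤ Kup / Klow := by
  have h3 := marg_lb hcont hlow hx hy (i := (i:ℕ))
  have h4 := marg_ub hcont hup hx hy (i := (i:ℕ)+1)
  have h1 := marg_lb hcont hlow hx hy (i := (i:ℕ)+1)
  have hKup : 0 < Kup := lt_of_lt_of_le h0 (le_trans h1 h4)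
  exact div_le_div₀ (le_trans h0.le (le_trans h3 (marg_ub hcont hup hx hy))) h4 h0 h3

lemma condDensity_diff
    (hcont : ContinuousOn (fun p : (Fin d → ℝ) × (Fin d → ℝ) => κ p.1 p.2) ((cube d) ×ˢ (cube d)))
    (hlow : ∀ x ∈ cube d, ∀ y ∈ cube d, Klow ≤ κ x y)
    (hup : ∀ x ∈ cube d, ∀ y ∈ cube d, κ x y ≤ Kup) (h0 : 0 < Klow)
    {ε η : ℝ} (hε : 0 ≤ ε)
    (hκη : ∀ p ∈ (cube d) ×ˢ (cube d), ∀ q ∈ (cube d) ×ˢ (cube d),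
      dist p q ≤ η → |κ p.1 p.2 - κ q.1 q.2| ≤ ε)
    {i : Fin d} {x y x' y' : Fin d → ℝ} (hx : x ∈ cube d) (hy : y ∈ cube d)
    (hx' : x' ∈ cube d) (hy' : y' ∈ cube d)
    (hdx : dist x x' ≤ η) (hdy : dist y y' ≤ η) :
    |condDensity κ i x y - condDensity κ i x' y'| ≤ (1 / Klow + Kup / Klow ^ 2) * ε := by
  set a := marg κ ((i:ℕ)+1) x y with ha
  set bq := marg κ (i:ℕ) x y with hbq
  set a' := marg κ ((i:ℕ)+1) x' y' with ha'
  set b' := marg κ (i:ℕ) x' y' with hb'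
  have hb1 : Klow ≤ bq := marg_lb hcont hlow hx hy
  have hb2 : Klow ≤ b' := marg_lb hcont hlow hx' hy'
  have ha2 : a' ≤ Kup := marg_ub hcont hup hx' hy'
  have ha2' : 0 ≤ a' := le_trans h0.le (marg_lb hcont hlow hx' hy')
  have hbp : 0 < bq := lt_of_lt_of_le h0 hb1
  have hbp' : 0 < b' := lt_of_lt_of_le h0 hb2
  have hda : |a - a'| ≤ ε := marg_diff hcont hκη hx hy hx' hy' hdx hdy
  have hdb : |bq - b'| ≤ ε := marg_diff hcont hκη hx hy hx' hy' hdx hdy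
  have hiden : a / bq - a' / b' = (a - a') / bq + a' * (b' - bq) / (bq * b') := by
    field_simp
    ring
  have hKup : 0 < Kup := lt_of_le_of_lt (le_of_eq rfl) (lt_of_lt_of_le h0 (le_trans hb2 (marg_ub hcont hup hx' hy')))
  calc |a / bq - a' / b'| = |(a - a') / bq + a' * (b' - bq) / (bq * b')| := by rw [hiden]
    _ ≤ |(a - a') / bq| + |a' * (b' - bq) / (bq * b')| := abs_add_le _ _
    _ = |a - a'| / bq + a' * |b' - bq| / (bq * b') := by
        rw [abs_div, abs_div, abs_of_pos hbp, abs_mul, abs_of_pos (mul_pos hbp hbp'),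
          abs_of_nonneg ha2']
    _ ≤ ε / Klow + Kup * ε / (Klow * Klow) := by
        gcongr
        · rwa [abs_sub_comm] at hdb
    _ = (1 / Klow + Kup / Klow ^ 2) * ε := by field_simp

end cdfsec

section cdf2
variable {d : ℕ} {κ : (Fin d → ℝ) → (Fin d → ℝ) → ℝ} {Klow Kup : ℝ}

lemma continuousOn_condDensity_update
    (hcont : ContinuousOn (fun p : (Fin d → ℝ) × (Fin d → ℝ) => κ p.1 p.2) ((cube d) ×ˢ (cube d)))
    (hlow : ∀ x ∈ cube d, ∀ y ∈ cube d, Klow ≤ κ x y)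
    (hup : ∀ x ∈ cube d, ∀ y ∈ cube d, κ x y ≤ Kup) (h0 : 0 < Klow)
    (hUC : ∀ ε > (0:ℝ), ∃ η > (0:ℝ), ∀ p ∈ (cube d) ×ˢ (cube d), ∀ q ∈ (cube d) ×ˢ (cube d),
      dist p q ≤ η → |κ p.1 p.2 - κ q.1 q.2| ≤ ε)
    {i : Fin d} {x y : Fin d → ℝ} (hx : x ∈ cube d) (hy : y ∈ cube d) :
    ContinuousOn (fun r : ℝ => condDensity κ i x (Function.update y i r)) (Set.Icc 0 1) := by
  have hC : (0:ℝ) < 1 / Klow + Kup / Klow ^ 2 := by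
    have hKup : 0 < Kup := lt_of_lt_of_le h0 (le_trans (hlow _ zero_mem_cube _ zero_mem_cube)
      (hup _ zero_mem_cube _ zero_mem_cube))
    positivity
  rw [Metric.continuousOn_iff]
  intro r hr ε hε
  set C := 1 / Klow + Kup / Klow ^ 2 with hCdef
  obtain ⟨η, hη, hκη⟩ := hUC (ε / (2 * C)) (by positivity)
  refine ⟨η, hη, fun r' hr' hdr => ?_⟩
  have h1 : |condDensity κ i x (Function.update y i r') -
      condDensity κ i x (Function.update y i r)| ≤ C * (ε / (2 * C)) := by
    refine condDensity_diff hcont hlow hup h0 (by positivity) hκη hx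
      (update_mem_cube hy hr') hx (update_mem_cube hy hr) (by simp [hη.le]) ?_
    exact le_trans dist_update_le hdr.le
  rw [Real.dist_eq]
  calc |condDensity κ i x (Function.update y i r') - condDensity κ i x (Function.update y i r)|
      ≤ C * (ε / (2 * C)) := h1
    _ = ε / 2 := by field_simp
    _ < ε := by linarith

lemma intervalIntegrable_condDensity_update
    (hcont : ContinuousOn (fun p : (Fin d → ℝ) × (Fin d → ℝ) => κ p.1 p.2) ((cube d) ×ˢ (cube d)))
    (hlow : ∀ x ∈ cube d, ∀ y ∈ cube d, Klow ≤ κ x y)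
    (hup : ∀ x ∈ cube d, ∀ y ∈ cube d, κ x y ≤ Kup) (h0 : 0 < Klow)
    (hUC : ∀ ε > (0:ℝ), ∃ η > (0:ℝ), ∀ p ∈ (cube d) ×ˢ (cube d), ∀ q ∈ (cube d) ×ˢ (cube d),
      dist p q ≤ η → |κ p.1 p.2 - κ q.1 q.2| ≤ ε)
    {i : Fin d} {x y : Fin d → ℝ} (hx : x ∈ cube d) (hy : y ∈ cube d)
    {s s' : ℝ} (hs : s ∈ Set.Icc (0:ℝ) 1) (hs' : s' ∈ Set.Icc (0:ℝ) 1) :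
    IntervalIntegrable (fun r : ℝ => condDensity κ i x (Function.update y i r)) volume s s' := by
  refine ((continuousOn_condDensity_update hcont hlow hup h0 hUC hx hy).mono ?_).intervalIntegrable
  exact Set.uIcc_subset_Icc hs hs'

end cdf2

section cdf3
variable {d : ℕ} {κ : (Fin d → ℝ) → (Fin d → ℝ) → ℝ} {Klow Kup : ℝ}

lemma condCDF'_incr
    (hcont : ContinuousOn (fun p : (Fin d → ℝ) × (Fin d → ℝ) => κ p.1 p.2) ((cube d) ×ˢ (cube d)))
    (hlow : ∀ x ∈ cube d, ∀ y ∈ cube d, Klow ≤ κ x y)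
    (hup : ∀ x ∈ cube d, ∀ y ∈ cube d, κ x y ≤ Kup) (h0 : 0 < Klow)
    (hUC : ∀ ε > (0:ℝ), ∃ η > (0:ℝ), ∀ p ∈ (cube d) ×ˢ (cube d), ∀ q ∈ (cube d) ×ˢ (cube d),
      dist p q ≤ η → |κ p.1 p.2 - κ q.1 q.2| ≤ ε)
    {i : Fin d} {x y : Fin d → ℝ} (hx : x ∈ cube d) (hy : y ∈ cube d)
    {s s' : ℝ} (h0s : 0 ≤ s) (hss' : s ≤ s') (hs'1 : s' ≤ 1) :
    Klow / Kup * (s' - s) ≤ condCDF' κ i x y s' - condCDF' κ i x y s ∧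
      condCDF' κ i x y s' - condCDF' κ i x y s ≤ Kup / Klow * (s' - s) := by
  have hs : s ∈ Set.Icc (0:ℝ) 1 := ⟨h0s, le_trans hss' hs'1⟩
  have hs' : s' ∈ Set.Icc (0:ℝ) 1 := ⟨le_trans h0s hss', hs'1⟩
  have hI1 := intervalIntegrable_condDensity_update (i := i) hcont hlow hup h0 hUC hx hy
    (Set.left_mem_Icc.2 zero_le_one) hs
  have hI2 := intervalIntegrable_condDensity_update (i := i) hcont hlow hup h0 hUC hx hy hs hs'
  have hadd := intervalIntegral.integral_add_adjacent_intervals hI1 hI2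
  have hdiffeq : condCDF' κ i x y s' - condCDF' κ i x y s
      = ∫ r in s..s', condDensity κ i x (Function.update y i r) := by
    unfold condCDF'
    rw [← hadd]; ring
  have hlow' : ∀ r ∈ Set.Icc s s', Klow / Kup ≤ condDensity κ i x (Function.update y i r) :=
    fun r hr => condDensity_lb hcont hlow hup h0 hx
      (update_mem_cube hy ⟨le_trans h0s hr.1, le_trans hr.2 hs'1⟩)
  have hup' : ∀ r ∈ Set.Icc s s', condDensity κ i x (Function.update y i r) ≤ Kup / Klow :=
    fun r hr => condDensity_ub hcont hlow hup h0 hx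
      (update_mem_cube hy ⟨le_trans h0s hr.1, le_trans hr.2 hs'1⟩)
  constructor
  · rw [hdiffeq]
    have := intervalIntegral.integral_mono_on hss'
      (intervalIntegrable_const (c := Klow / Kup)) hI2 hlow'
    rwa [intervalIntegral.integral_const, smul_eq_mul, mul_comm] at this
  · rw [hdiffeq]
    have := intervalIntegral.integral_mono_on hss' hI2
      (intervalIntegrable_const (c := Kup / Klow)) hup'
    rwa [intervalIntegral.integral_const, smul_eq_mul, mul_comm] at this

lemma condCDF'_zero {i : Fin d} {x y : Fin d → ℝ} : condCDF' κ i x y 0 = 0 := by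
  unfold condCDF'; simp

lemma condCDF'_congr {i : Fin d} {x y y' : Fin d → ℝ} {s : ℝ}
    (h : ∀ j : Fin d, (j:ℕ) < (i:ℕ) → y j = y' j) :
    condCDF' κ i x y s = condCDF' κ i x y' s := by
  unfold condCDF'
  refine intervalIntegral.integral_congr (fun r _ => ?_)
  unfold condDensity
  have h1 : marg κ ((i:ℕ)+1) x (Function.update y i r)
      = marg κ ((i:ℕ)+1) x (Function.update y' i r) := by
    refine marg_congr (fun j hj => ?_)
    rcases eq_or_ne j i with he | he
    · subst he; simp
    · have : (j:ℕ) < (i:ℕ) := by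
        rcases lt_or_ge (j:ℕ) (i:ℕ) with h' | h'
        · exact h'
        · exfalso; exact he (Fin.ext (by omega))
      rw [Function.update_of_ne he, Function.update_of_ne he]; exact h j this
  have h2 : marg κ (i:ℕ) x (Function.update y i r)
      = marg κ (i:ℕ) x (Function.update y' i r) := by
    refine marg_congr (fun j hj => ?_)
    have he : j ≠ i := fun hji => by subst hji; omega
    rw [Function.update_of_ne he, Function.update_of_ne he]
    exact h j hj
  rw [h1, h2]

lemma condCDF'_diff
    (hcont : ContinuousOn (fun p : (Fin d → ℝ) × (Fin d → ℝ) => κ p.1 p.2) ((cube d) ×ˢ (cube d)))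
    (hlow : ∀ x ∈ cube d, ∀ y ∈ cube d, Klow ≤ κ x y)
    (hup : ∀ x ∈ cube d, ∀ y ∈ cube d, κ x y ≤ Kup) (h0 : 0 < Klow)
    (hUC : ∀ ε > (0:ℝ), ∃ η > (0:ℝ), ∀ p ∈ (cube d) ×ˢ (cube d), ∀ q ∈ (cube d) ×ˢ (cube d),
      dist p q ≤ η → |κ p.1 p.2 - κ q.1 q.2| ≤ ε)
    {ε η : ℝ} (hε : 0 ≤ ε)
    (hκη : ∀ p ∈ (cube d) ×ˢ (cube d), ∀ q ∈ (cube d) ×ˢ (cube d),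
      dist p q ≤ η → |κ p.1 p.2 - κ q.1 q.2| ≤ ε)
    {i : Fin d} {x y x' y' : Fin d → ℝ} (hx : x ∈ cube d) (hy : y ∈ cube d)
    (hx' : x' ∈ cube d) (hy' : y' ∈ cube d)
    (hdx : dist x x' ≤ η) (hdy : dist y y' ≤ η)
    {s : ℝ} (hs : s ∈ Set.Icc (0:ℝ) 1) :
    |condCDF' κ i x y s - condCDF' κ i x' y' s| ≤ (1 / Klow + Kup / Klow ^ 2) * ε := by
  have hI1 := intervalIntegrable_condDensity_update (i := i) hcont hlow hup h0 hUC hx hy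
    (Set.left_mem_Icc.2 zero_le_one) hs
  have hI2 := intervalIntegrable_condDensity_update (i := i) hcont hlow hup h0 hUC hx' hy'
    (Set.left_mem_Icc.2 zero_le_one) hs
  have hsub : condCDF' κ i x y s - condCDF' κ i x' y' s
      = ∫ r in (0:ℝ)..s, (condDensity κ i x (Function.update y i r)
          - condDensity κ i x' (Function.update y' i r)) := by
    exact (intervalIntegral.integral_sub hI1 hI2).symm
  have hC : (0:ℝ) ≤ (1 / Klow + Kup / Klow ^ 2) * ε := by
    have hKup : 0 < Kup := lt_of_lt_of_le h0 (le_trans (hlow _ zero_mem_cube _ zero_mem_cube)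
      (hup _ zero_mem_cube _ zero_mem_cube))
    positivity
  have hbd : ∀ r ∈ Set.uIoc (0:ℝ) s,
      ‖condDensity κ i x (Function.update y i r)
        - condDensity κ i x' (Function.update y' i r)‖ ≤ (1 / Klow + Kup / Klow ^ 2) * ε := by
    intro r hr
    rw [Set.uIoc_of_le hs.1] at hr
    have hrI : r ∈ Set.Icc (0:ℝ) 1 := ⟨hr.1.le, le_trans hr.2 hs.2⟩
    rw [Real.norm_eq_abs]
    exact condDensity_diff hcont hlow hup h0 hε hκη hx (update_mem_cube hy hrI) hx'
      (update_mem_cube hy' hrI) hdx (le_trans dist_update_update_le hdy)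
  calc |condCDF' κ i x y s - condCDF' κ i x' y' s|
      = ‖∫ r in (0:ℝ)..s, (condDensity κ i x (Function.update y i r)
          - condDensity κ i x' (Function.update y' i r))‖ := by
        rw [hsub, Real.norm_eq_abs]
    _ ≤ (1 / Klow + Kup / Klow ^ 2) * ε * |s - 0| :=
        intervalIntegral.norm_integral_le_of_norm_le_const hbd
    _ ≤ (1 / Klow + Kup / Klow ^ 2) * ε * 1 := by
        have : |s - 0| ≤ 1 := by rw [sub_zero, abs_of_nonneg hs.1]; exact hs.2
        exact mul_le_mul_of_nonneg_left this hC
    _ = (1 / Klow + Kup / Klow ^ 2) * ε := mul_one _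

end cdf3

section fubini
variable {n : ℕ}

lemma continuous_insertNth (i : Fin (n+1)) :
    Continuous (fun p : ℝ × (Fin n → ℝ) => (i.insertNth p.1 p.2 : Fin (n+1) → ℝ)) := by
  refine continuous_pi fun k => ?_
  rcases eq_or_ne k i with h | h
  · subst h
    have : (fun p : ℝ × (Fin n → ℝ) => (k.insertNth p.1 p.2 : Fin (n+1) → ℝ) k) = fun p => p.1 := by
      funext p; exact Fin.insertNth_apply_same (α := fun _ => ℝ) k p.1 p.2
    rw [this]; exact continuous_fst
  · obtain ⟨j, rfl⟩ := Fin.exists_succAbove_eq h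
    have : (fun p : ℝ × (Fin n → ℝ) => (i.insertNth p.1 p.2 : Fin (n+1) → ℝ) (i.succAbove j))
        = fun p => p.2 j := by
      funext p; exact Fin.insertNth_apply_succAbove (α := fun _ => ℝ) i p.1 p.2 j
    rw [this]; exact (continuous_apply j).comp continuous_snd

lemma insertNth_mem_cube {i : Fin (n+1)} {r : ℝ} {w : Fin n → ℝ}
    (hr : r ∈ Set.Icc (0:ℝ) 1) (hw : w ∈ cube n) : i.insertNth r w ∈ cube (n+1) := by
  intro k
  rcases eq_or_ne k i with h | h
  · subst h; rw [Fin.insertNth_apply_same]; exact hr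
  · obtain ⟨j, rfl⟩ := Fin.exists_succAbove_eq h
    rw [Fin.insertNth_apply_succAbove]; exact hw j

lemma integral_cube_succ (i : Fin (n+1)) (f : (Fin (n+1) → ℝ) → ℝ)
    (hf : ContinuousOn f (cube (n+1))) :
    ∫ z in cube (n+1), f z
      = ∫ r in Set.Icc (0:ℝ) 1, ∫ w in cube n, f (i.insertNth r w) := by
  set e := MeasurableEquiv.piFinSuccAbove (fun _ : Fin (n+1) => ℝ) i with he
  have hMP : MeasurePreserving e := volume_preserving_piFinSuccAbove (fun _ : Fin (n+1) => ℝ) i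
  have hemb := e.measurableEmbedding
  have h1 : ∀ z : Fin (n+1) → ℝ, (e z).1 = z i := fun _ => rfl
  have h2 : ∀ (z : Fin (n+1) → ℝ) (j : Fin n), (e z).2 j = z (i.succAbove j) := fun _ _ => rfl
  have hpre : ⇑e ⁻¹' ((Set.Icc (0:ℝ) 1) ×ˢ cube n) = cube (n+1) := by
    ext z
    simp only [Set.mem_preimage, Set.mem_prod]
    constructor
    · rintro ⟨ha, hb⟩ k
      rcases eq_or_ne k i with h | h
      · subst h; rw [h1 z] at ha; exact ha
      · obtain ⟨j, rfl⟩ := Fin.exists_succAbove_eq h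
        have := hb j; rwa [h2 z j] at this
    · intro hz
      constructor
      · rw [h1 z]; exact hz i
      · intro j; rw [h2 z j]; exact hz _
  have key := hMP.setIntegral_preimage_emb hemb
    (fun p : ℝ × (Fin n → ℝ) => f (i.insertNth p.1 p.2)) ((Set.Icc (0:ℝ) 1) ×ˢ cube n)
  have hcomp : ∀ z : Fin (n+1) → ℝ, f (i.insertNth (e z).1 (e z).2) = f z := by
    intro z
    congr 1
    have hc : (e z).2 = i.removeNth z := rfl
    rw [hc, h1 z]
    exact Fin.insertNth_self_removeNth i z
  rw [hpre] at key
  simp only [hcomp] at key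
  rw [key]
  have hg : ContinuousOn (fun p : ℝ × (Fin n → ℝ) => f (i.insertNth p.1 p.2))
      ((Set.Icc (0:ℝ) 1) ×ˢ cube n) :=
    hf.comp (continuous_insertNth i).continuousOn (fun p hp => insertNth_mem_cube hp.1 hp.2)
  have hint : IntegrableOn (fun p : ℝ × (Fin n → ℝ) => f (i.insertNth p.1 p.2))
      ((Set.Icc (0:ℝ) 1) ×ˢ cube n) (volume.prod volume) := by
    rw [← Measure.volume_eq_prod]
    exact hg.integrableOn_compact (isCompact_Icc.prod isCompact_cube)
  rw [Measure.volume_eq_prod]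
  exact setIntegral_prod _ hint

end fubini

section fone
variable {d : ℕ} {κ : (Fin d → ℝ) → (Fin d → ℝ) → ℝ} {Klow Kup : ℝ}

lemma removeNth_mem_cube {n : ℕ} {i : Fin (n+1)} {z : Fin (n+1) → ℝ} (hz : z ∈ cube (n+1)) :
    i.removeNth z ∈ cube n := fun j => hz (i.succAbove j)

lemma marg_succ_integral
    (hcont : ContinuousOn (fun p : (Fin d → ℝ) × (Fin d → ℝ) => κ p.1 p.2) ((cube d) ×ˢ (cube d)))
    {i : Fin d} {x y : Fin d → ℝ} (hx : x ∈ cube d) (hy : y ∈ cube d) :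
    ∫ r in Set.Icc (0:ℝ) 1, marg κ ((i:ℕ)+1) x (Function.update y i r) = marg κ (i:ℕ) x y := by
  obtain ⟨n, rfl⟩ : ∃ n, d = n + 1 := ⟨d - 1, by have := i.pos; omega⟩
  set f : (Fin (n+1) → ℝ) → ℝ :=
    fun z => κ x (fun j : Fin (n+1) => if (j:ℕ) < (i:ℕ) then y j else z j) with hf
  have hfc : ContinuousOn f (cube (n+1)) := continuousOn_mix hcont hx hy
  have hrem : Continuous (fun z : Fin (n+1) → ℝ => (i.removeNth z : Fin n → ℝ)) :=
    continuous_pi fun j => continuous_apply _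
  -- Step B : the inner marginal as an integral over cube n
  have stepB : ∀ r ∈ Set.Icc (0:ℝ) 1,
      marg κ ((i:ℕ)+1) x (Function.update y i r)
        = ∫ w in cube n, f (i.insertNth r w) := by
    intro r hr
    have hupd : ∀ z : Fin (n+1) → ℝ, Function.update z i r = i.insertNth r (i.removeNth z) := by
      intro z
      funext k
      rcases eq_or_ne k i with h | h
      · subst h; rw [Fin.insertNth_apply_same]; simp
      · obtain ⟨j, rfl⟩ := Fin.exists_succAbove_eq h
        rw [Fin.insertNth_apply_succAbove, Function.update_of_ne h]
        rfl
    have hmix : ∀ z : Fin (n+1) → ℝ,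
        (fun j : Fin (n+1) => if (j:ℕ) < (i:ℕ)+1 then Function.update y i r j else z j)
          = fun j : Fin (n+1) => if (j:ℕ) < (i:ℕ) then y j else (Function.update z i r) j := by
      intro z
      funext k
      rcases eq_or_ne k i with h | h
      · subst h; simp
      · have hne : ((k:ℕ)) ≠ ((i:ℕ)) := fun hc => h (Fin.ext hc)
        rw [Function.update_of_ne h, Function.update_of_ne h]
        by_cases hlt : (k:ℕ) < (i:ℕ)
        · simp [hlt, Nat.lt_succ_of_lt hlt]
        · have : ¬ (k:ℕ) < (i:ℕ)+1 := by omega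
          simp [hlt, this]
    have e1 : marg κ ((i:ℕ)+1) x (Function.update y i r)
        = ∫ z in cube (n+1), f (i.insertNth r (i.removeNth z)) := by
      unfold marg
      congr 1
      funext z
      rw [hmix z, ← hupd z]
    have hg : ContinuousOn (fun z : Fin (n+1) → ℝ => f (i.insertNth r (i.removeNth z)))
        (cube (n+1)) :=
      hfc.comp ((continuous_insertNth i).comp (continuous_const.prodMk hrem)).continuousOn
        (fun z hz => insertNth_mem_cube hr (removeNth_mem_cube hz))
    have e2 := integral_cube_succ i _ hg
    have e3 : ∀ r' ∈ Set.Icc (0:ℝ) 1,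
        (∫ w in cube n, f (i.insertNth r (i.removeNth (i.insertNth r' w : Fin (n+1) → ℝ))))
          = ∫ w in cube n, f (i.insertNth r w) := by
      intro r' _
      congr 1
      funext w
      rw [Fin.removeNth_insertNth]
    rw [e1, e2]
    rw [setIntegral_congr_fun measurableSet_Icc e3, setIntegral_const]
    rw [measureReal_def, Real.volume_Icc]
    norm_num
  -- Step A : the outer marginal
  have stepA : marg κ (i:ℕ) x y
      = ∫ r in Set.Icc (0:ℝ) 1, ∫ w in cube n, f (i.insertNth r w) := by
    unfold marg
    exact integral_cube_succ i f hfc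
  rw [stepA]
  exact setIntegral_congr_fun measurableSet_Icc stepB

lemma condCDF'_one
    (hcont : ContinuousOn (fun p : (Fin d → ℝ) × (Fin d → ℝ) => κ p.1 p.2) ((cube d) ×ˢ (cube d)))
    (hlow : ∀ x ∈ cube d, ∀ y ∈ cube d, Klow ≤ κ x y) (h0 : 0 < Klow)
    {i : Fin d} {x y : Fin d → ℝ} (hx : x ∈ cube d) (hy : y ∈ cube d) :
    condCDF' κ i x y 1 = 1 := by
  have hDpos : 0 < marg κ (i:ℕ) x y := lt_of_lt_of_le h0 (marg_lb hcont hlow hx hy)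
  have hcd : ∀ r : ℝ, condDensity κ i x (Function.update y i r)
      = marg κ ((i:ℕ)+1) x (Function.update y i r) / marg κ (i:ℕ) x y := by
    intro r
    unfold condDensity
    congr 1
    refine marg_congr (fun j hj => ?_)
    have : j ≠ i := fun hji => by subst hji; omega
    rw [Function.update_of_ne this]
  unfold condCDF'
  have : (fun r => condDensity κ i x (Function.update y i r))
      = fun r => marg κ ((i:ℕ)+1) x (Function.update y i r) / marg κ (i:ℕ) x y := by
    funext r; exact hcd r
  rw [this, intervalIntegral.integral_div]
  rw [intervalIntegral.integral_of_le zero_le_one]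
  rw [← MeasureTheory.integral_Icc_eq_integral_Ioc]
  rw [marg_succ_integral hcont hx hy]
  exact div_self (ne_of_gt hDpos)

end fone

section onestep
variable {d : ℕ} {κ : (Fin d → ℝ) → (Fin d → ℝ) → ℝ} {Klow Kup : ℝ}

lemma kup_pos (hlow : ∀ x ∈ cube d, ∀ y ∈ cube d, Klow ≤ κ x y)
    (hup : ∀ x ∈ cube d, ∀ y ∈ cube d, κ x y ≤ Kup) (h0 : 0 < Klow) : 0 < Kup :=
  lt_of_lt_of_le h0 (le_trans (hlow _ zero_mem_cube _ zero_mem_cube)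
    (hup _ zero_mem_cube _ zero_mem_cube))

lemma onestep
    (hcont : ContinuousOn (fun p : (Fin d → ℝ) × (Fin d → ℝ) => κ p.1 p.2) ((cube d) ×ˢ (cube d)))
    (hlow : ∀ x ∈ cube d, ∀ y ∈ cube d, Klow ≤ κ x y)
    (hup : ∀ x ∈ cube d, ∀ y ∈ cube d, κ x y ≤ Kup) (h0 : 0 < Klow)
    (hUC : ∀ ε > (0:ℝ), ∃ η > (0:ℝ), ∀ p ∈ (cube d) ×ˢ (cube d), ∀ q ∈ (cube d) ×ˢ (cube d),
      dist p q ≤ η → |κ p.1 p.2 - κ q.1 q.2| ≤ ε)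
    {σ η ε : ℝ} (hσ : 0 < σ) (hε : 0 ≤ ε)
    (hκη : ∀ p ∈ (cube d) ×ˢ (cube d), ∀ q ∈ (cube d) ×ˢ (cube d),
      dist p q ≤ η → |κ p.1 p.2 - κ q.1 q.2| ≤ ε)
    (hCε : (1 / Klow + Kup / Klow ^ 2) * ε ≤ Klow / Kup * σ / 4)
    {i : Fin d} {x xt y x' : Fin d → ℝ}
    (hx : x ∈ cube d) (hxt : xt ∈ cube d) (hy : y ∈ cube d) (hx' : x' ∈ cube d)
    (hdx : dist x xt ≤ η)
    (hprev : ∀ j : Fin d, (j:ℕ) < (i:ℕ) → |y j - x' j| ≤ η)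
    (hui : |condCDF' κ i x y (y i) - condCDF' κ i xt x' (x' i)| ≤ Klow / Kup * σ / 4) :
    |y i - x' i| ≤ σ := by
  have hKup : 0 < Kup := kup_pos hlow hup h0
  have hc1 : 0 < Klow / Kup := div_pos h0 hKup
  have hηnn : 0 ≤ η := le_trans dist_nonneg hdx
  set w : Fin d → ℝ := fun j => if (j:ℕ) < (i:ℕ) then y j else x' j with hwdef
  have hw : w ∈ cube d := mix_mem hy hx'
  have hFyw : condCDF' κ i x y (y i) = condCDF' κ i x w (y i) :=
    condCDF'_congr (fun j hj => (if_pos hj).symm)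
  have hdw : dist w x' ≤ η := by
    rw [dist_pi_le_iff hηnn]
    intro j
    show dist (if (j:ℕ) < (i:ℕ) then y j else x' j) (x' j) ≤ η
    by_cases hj : (j:ℕ) < (i:ℕ)
    · rw [if_pos hj, Real.dist_eq]; exact hprev j hj
    · rw [if_neg hj, dist_self]; exact hηnn
  have hFdiff : |condCDF' κ i x w (x' i) - condCDF' κ i xt x' (x' i)|
      ≤ (1 / Klow + Kup / Klow ^ 2) * ε :=
    condCDF'_diff hcont hlow hup h0 hUC hε hκη hx hw hxt hx' hdx hdw (hx' i)
  have hkey : |condCDF' κ i x w (y i) - condCDF' κ i x w (x' i)| ≤ Klow / Kup * σ / 2 := by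
    have h1 : |condCDF' κ i x w (y i) - condCDF' κ i x w (x' i)|
        ≤ |condCDF' κ i x y (y i) - condCDF' κ i xt x' (x' i)|
          + |condCDF' κ i x w (x' i) - condCDF' κ i xt x' (x' i)| := by
      rw [← hFyw]
      have : condCDF' κ i x y (y i) - condCDF' κ i x w (x' i)
          = (condCDF' κ i x y (y i) - condCDF' κ i xt x' (x' i))
            - (condCDF' κ i x w (x' i) - condCDF' κ i xt x' (x' i)) := by ring
      rw [this]
      exact abs_sub _ _
    calc |condCDF' κ i x w (y i) - condCDF' κ i x w (x' i)|
        ≤ Klow / Kup * σ / 4 + (1 / Klow + Kup / Klow ^ 2) * ε := by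
          refine le_trans h1 (add_le_add hui hFdiff)
      _ ≤ Klow / Kup * σ / 4 + Klow / Kup * σ / 4 := by linarith
      _ = Klow / Kup * σ / 2 := by ring
  have hlb : Klow / Kup * |y i - x' i|
      ≤ |condCDF' κ i x w (y i) - condCDF' κ i x w (x' i)| := by
    rcases le_total (y i) (x' i) with hc | hc
    · have hstep := (condCDF'_incr (i := i) hcont hlow hup h0 hUC hx hw (hy i).1 hc (hx' i).2).1
      have hp : 0 ≤ Klow / Kup * (x' i - y i) := mul_nonneg hc1.le (by linarith)
      rw [abs_sub_comm (y i) (x' i), abs_of_nonneg (by linarith : (0:ℝ) ≤ x' i - y i),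
        abs_sub_comm (condCDF' κ i x w (y i)),
        abs_of_nonneg (by linarith : (0:ℝ) ≤ condCDF' κ i x w (x' i) - condCDF' κ i x w (y i))]
      exact hstep
    · have hstep := (condCDF'_incr (i := i) hcont hlow hup h0 hUC hx hw (hx' i).1 hc (hy i).2).1
      have hp : 0 ≤ Klow / Kup * (y i - x' i) := mul_nonneg hc1.le (by linarith)
      rw [abs_of_nonneg (by linarith : (0:ℝ) ≤ y i - x' i),
        abs_of_nonneg (by linarith : (0:ℝ) ≤ condCDF' κ i x w (y i) - condCDF' κ i x w (x' i))]
      exact hstep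
  have : Klow / Kup * |y i - x' i| ≤ Klow / Kup * σ / 2 := le_trans hlb hkey
  have h2 : |y i - x' i| ≤ σ / 2 := by
    have h3 : Klow / Kup * |y i - x' i| ≤ Klow / Kup * (σ / 2) := by linarith
    exact le_of_mul_le_mul_left h3 hc1
  linarith [h2, hσ]

end onestep

lemma main_delta {d b t : ℕ} (hd : 0 < d) (hb : 2 ≤ b)
    (u : ℕ → Fin d → ℝ) (hu : IsTSeq b t u)
    (κ : (Fin d → ℝ) → (Fin d → ℝ) → ℝ)
    (Klow : ℝ) (hA2 : A2 κ Klow)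
    (G : (Fin d → ℝ) → (Fin d → ℝ) → (Fin d → ℝ)) (hG : IsInvRos κ G)
    (δ : ℝ) (hδ : 0 < δ) :
    ∃ k : ℕ, t + d ≤ k ∧ ∃ r : ℝ, 0 < r ∧
      ∀ xt ∈ cube d, ∀ x' ∈ cube d, ∀ a : ℕ, ∀ xs : ℕ → Fin d → ℝ,
        (∀ n ∈ Finset.Ico (a * b ^ k) (a * b ^ k + b ^ k), xs n ∈ ball' r xt) →
        b ^ t ≤ ((Finset.Ico (a * b ^ k) (a * b ^ k + b ^ k)).filter
          (fun n => G (xs n) (u n) ∈ ball' δ x')).card := by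
  obtain ⟨hcont, h0, hlow⟩ := hA2
  -- upper bound Kup
  obtain ⟨C, hC⟩ := (isCompact_cube.prod isCompact_cube).exists_bound_of_continuousOn hcont
  set Kup : ℝ := max C Klow with hKupdef
  have hup : ∀ x ∈ cube d, ∀ y ∈ cube d, κ x y ≤ Kup := fun x hx y hy =>
    le_trans (le_trans (le_abs_self _) (hC (x, y) ⟨hx, hy⟩)) (le_max_left _ _)
  have hKup : 0 < Kup := kup_pos hlow hup h0
  have hc1 : 0 < Klow / Kup := div_pos h0 hKup
  set C₀ : ℝ := 1 / Klow + Kup / Klow ^ 2 with hC₀def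
  have hC₀ : 0 < C₀ := by positivity
  -- uniform continuity
  have hUC : ∀ ε > (0:ℝ), ∃ η > (0:ℝ), ∀ p ∈ (cube d) ×ˢ (cube d), ∀ q ∈ (cube d) ×ˢ (cube d),
      dist p q ≤ η → |κ p.1 p.2 - κ q.1 q.2| ≤ ε := by
    have huc := (isCompact_cube.prod isCompact_cube).uniformContinuousOn_of_continuous hcont
    rw [Metric.uniformContinuousOn_iff_le] at huc
    intro ε hε
    obtain ⟨η, hη, hP⟩ := huc ε hε
    exact ⟨η, hη, fun p hp q hq hd' => by
      have := hP p hp q hq hd'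
      rwa [Real.dist_eq] at this⟩
  -- the modulus function
  have hEta : ∀ σ : ℝ, ∃ η : ℝ, 0 < σ → (0 < η ∧ η ≤ σ ∧
      ∀ p ∈ (cube d) ×ˢ (cube d), ∀ q ∈ (cube d) ×ˢ (cube d),
        dist p q ≤ η → |κ p.1 p.2 - κ q.1 q.2| ≤ Klow / Kup * σ / 4 / C₀) := by
    intro σ
    by_cases hσ : 0 < σ
    · obtain ⟨η, hη, hP⟩ := hUC (Klow / Kup * σ / 4 / C₀) (by positivity)
      exact ⟨min η σ, fun _ => ⟨lt_min hη hσ, min_le_right _ _,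
        fun p hp q hq hd' => hP p hp q hq (le_trans hd' (min_le_left _ _))⟩⟩
    · exact ⟨0, fun h => absurd h hσ⟩
  choose etaF hEtaP using hEta
  set T : ℕ → ℝ := fun m => etaF^[m] δ with hTdef
  have hT0 : T 0 = δ := rfl
  have hTsucc : ∀ m, T (m + 1) = etaF (T m) := fun m => Function.iterate_succ_apply' etaF m δ
  have hTpos : ∀ m, 0 < T m := by
    intro m
    induction m with
    | zero => exact hδ
    | succ m ih => rw [hTsucc]; exact ((hEtaP (T m)) ih).1
  have hTstep : ∀ m, T (m + 1) ≤ T m := fun m => by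
    rw [hTsucc]; exact ((hEtaP (T m)) (hTpos m)).2.1
  have hTanti : ∀ p q : ℕ, p ≤ q → T q ≤ T p := fun p q h =>
    antitone_nat_of_succ_le hTstep h
  have hTled : ∀ m, T m ≤ δ := fun m => le_of_eq_of_le (by rfl) (by
    have := hTanti 0 m (Nat.zero_le m); rwa [hT0] at this)
  -- choose the digit resolution e
  set εu : ℝ := Klow / Kup * T (d - 1) / 4 with hεudef
  have hεupos : 0 < εu := by
    have := hTpos (d - 1); positivity
  obtain ⟨e0, he0⟩ := exists_pow_lt_of_lt_one hεupos
    (show (1:ℝ) / b < 1 by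
      rw [div_lt_one (by positivity)]
      exact_mod_cast lt_of_lt_of_le one_lt_two hb)
  set e : ℕ := e0 + 1 with hedef
  have hbe : ((1:ℝ) / b) ^ e ≤ εu := by
    refine le_trans (pow_le_pow_of_le_one (by positivity) ?_ (Nat.le_succ e0)) he0.le
    rw [div_le_one (by positivity)]
    exact_mod_cast le_trans one_le_two hb
  have hbpow : ∀ m : ℕ, (0:ℝ) < (b:ℝ) ^ m := fun m => by positivity
  have hBε : (1:ℝ) / (b:ℝ) ^ e ≤ εu := by rwa [← one_div_pow]
  refine ⟨t + d * e, by nlinarith [Nat.one_le_iff_ne_zero.2 (by omega : e ≠ 0)], T d,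
    hTpos d, ?_⟩
  intro xt hxt x' hx' a xs hxs
  set k := t + d * e with hkdef
  set A := a * b ^ k with hAdef
  set u' : Fin d → ℝ := Ros κ xt x' with hu'def
  have hu'mem : ∀ j : Fin d, u' j ∈ Set.Icc (0:ℝ) 1 := by
    intro j
    have h1 := (condCDF'_incr (i := j) hcont hlow hup h0 hUC hxt hx'
      le_rfl (hx' j).1 (le_trans (hx' j).2 le_rfl)).1
    have h2 := (condCDF'_incr (i := j) hcont hlow hup h0 hUC hxt hx'
      (hx' j).1 (hx' j).2 le_rfl).1
    have hF0 : condCDF' κ j xt x' 0 = 0 := condCDF'_zero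
    have hF1 : condCDF' κ j xt x' 1 = 1 := condCDF'_one hcont hlow h0 hxt hx'
    have hm1 : 0 ≤ Klow / Kup * (x' j - 0) := mul_nonneg hc1.le (by linarith [(hx' j).1])
    have hm2 : 0 ≤ Klow / Kup * (1 - x' j) := mul_nonneg hc1.le (by linarith [(hx' j).2])
    constructor
    · have := h1; rw [hF0] at this
      show (0:ℝ) ≤ condCDF' κ j xt x' (x' j)
      linarith
    · have := h2; rw [hF1] at this
      show condCDF' κ j xt x' (x' j) ≤ 1
      linarith
  -- the b-ary box around u'
  set cvec : Fin d → ℕ := fun j => min (Nat.floor (u' j * (b:ℝ) ^ e)) (b ^ e - 1) with hcdef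
  have hbe1 : 1 ≤ b ^ e := Nat.one_le_pow _ _ (by omega)
  have hclt : ∀ j, cvec j < b ^ e := fun j =>
    lt_of_le_of_lt (min_le_right _ _) (by omega)
  have hnet := hu.2 a k (by omega) (fun _ => e) cvec hclt (by
    rw [Finset.sum_const, Finset.card_univ, Fintype.card_fin, smul_eq_mul]
    omega)
  -- u' is in the closed box
  have hbox' : ∀ j, (cvec j : ℝ) / (b:ℝ) ^ e ≤ u' j ∧ u' j ≤ ((cvec j : ℝ) + 1) / (b:ℝ) ^ e := by
    intro j
    have h0u := (hu'mem j).1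
    have h1u := (hu'mem j).2
    constructor
    · rw [div_le_iff₀ (hbpow e)]
      calc ((cvec j : ℕ) : ℝ) ≤ (Nat.floor (u' j * (b:ℝ) ^ e) : ℝ) :=
            Nat.cast_le.2 (min_le_left _ _)
        _ ≤ u' j * (b:ℝ) ^ e := Nat.floor_le (by positivity)
    · by_cases hcase : Nat.floor (u' j * (b:ℝ) ^ e) ≤ b ^ e - 1
      · have hcj : cvec j = Nat.floor (u' j * (b:ℝ) ^ e) := min_eq_left hcase
        rw [hcj, le_div_iff₀ (hbpow e)]
        exact le_of_lt (Nat.lt_floor_add_one _)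
      · have hcj : cvec j = b ^ e - 1 := min_eq_right (by omega)
        rw [hcj]
        have : ((b ^ e - 1 : ℕ) : ℝ) + 1 = ((b:ℝ)) ^ e := by
          have : ((b ^ e - 1 : ℕ) : ℝ) = ((b ^ e : ℕ) : ℝ) - 1 := by
            rw [Nat.cast_sub hbe1]; norm_num
          rw [this]; push_cast; ring
        rw [this, div_self (ne_of_gt (hbpow e))]
        exact h1u
  -- main pointwise claim
  have claim : ∀ n ∈ Finset.Ico A (A + b ^ k),
      inBaryBox b (fun _ => e) cvec (u n) → G (xs n) (u n) ∈ ball' δ x' := by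
    intro n hn hbox
    have hxsn := hxs n hn
    obtain ⟨hxsc, hxsd⟩ := hxsn
    have hxsd' : dist (xs n) xt ≤ T d := by rwa [dist_eq_norm]
    have hun : ∀ i : Fin d, u n i ∈ Set.Icc (0:ℝ) 1 :=
      fun i => ⟨(hu.1 n i).1, le_of_lt (hu.1 n i).2⟩
    obtain ⟨hyc, hros⟩ := hG (xs n) hxsc (u n) hun
    set y := G (xs n) (u n) with hydef
    have hclose : ∀ j : Fin d, |u n j - u' j| ≤ εu := by
      intro j
      obtain ⟨hb1, hb2⟩ := hbox j
      obtain ⟨hb3, hb4⟩ := hbox' j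
      refine le_trans (abs_le.2 ⟨?_, ?_⟩) hBε
      · have : ((cvec j : ℝ) + 1) / (b:ℝ) ^ e - (cvec j : ℝ) / (b:ℝ) ^ e = 1 / (b:ℝ) ^ e := by
          field_simp; ring
        linarith
      · have : ((cvec j : ℝ) + 1) / (b:ℝ) ^ e - (cvec j : ℝ) / (b:ℝ) ^ e = 1 / (b:ℝ) ^ e := by
          field_simp; ring
        linarith
    -- the coordinatewise chain estimate
    have step : ∀ i : Fin d,
        (∀ j : Fin d, (j:ℕ) < (i:ℕ) → |y j - x' j| ≤ T (d - 1 - (j:ℕ))) →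
        |y i - x' i| ≤ T (d - 1 - (i:ℕ)) := by
      intro i hprev2
      have hσpos := hTpos (d - 1 - (i:ℕ))
      obtain ⟨hηpos, hηle, hκη⟩ := hEtaP (T (d - 1 - (i:ℕ))) hσpos
      have hid : (i:ℕ) < d := i.isLt
      have hηT : etaF (T (d - 1 - (i:ℕ))) = T (d - (i:ℕ)) := by
        have : d - (i:ℕ) = (d - 1 - (i:ℕ)) + 1 := by omega
        rw [this, hTsucc]
      refine onestep hcont hlow hup h0 hUC hσpos (by positivity) hκη
        (le_of_eq (by rw [← hC₀def, mul_comm]; exact div_mul_cancel₀ _ (ne_of_gt hC₀))) hxsc hxt hyc hx' ?_ ?_ ?_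
      · rw [hηT]
        exact le_trans hxsd' (hTanti _ _ (by omega))
      · intro j hj
        rw [hηT]
        exact le_trans (hprev2 j hj) (hTanti _ _ (by omega))
      · have hRos : condCDF' κ i (xs n) y (y i) = u n i := congrFun hros i
        have hu'i : u' i = condCDF' κ i xt x' (x' i) := rfl
        rw [hRos, ← hu'i]
        refine le_trans (hclose i) ?_
        rw [hεudef]
        have : T (d-1) ≤ T (d - 1 - (i:ℕ)) := hTanti _ _ (by omega)
        have h4 : (0:ℝ) < 4 := by norm_num
        calc Klow / Kup * T (d-1) / 4 ≤ Klow / Kup * T (d - 1 - (i:ℕ)) / 4 := by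
              gcongr
          _ = Klow / Kup * T (d - 1 - (i:ℕ)) / 4 := rfl
    have key : ∀ m : ℕ, ∀ i : Fin d, (i:ℕ) ≤ m → |y i - x' i| ≤ T (d - 1 - (i:ℕ)) := by
      intro m
      induction m with
      | zero => intro i hi
                exact step i (fun j hj => absurd (lt_of_lt_of_le hj hi) (Nat.not_lt_zero _))
      | succ m ih => intro i hi
                     exact step i (fun j hj => ih j (by omega))
    constructor
    · exact hyc
    · rw [← dist_eq_norm]
      rw [dist_pi_le_iff hδ.le]
      intro i
      rw [Real.dist_eq]
      exact le_trans (key (i:ℕ) i le_rfl) (le_trans (hTanti 0 _ (Nat.zero_le _)) (le_of_eq hT0))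
  -- count
  rw [← hnet]
  refine Finset.card_le_card ?_
  intro n hn
  rw [Finset.mem_filter] at hn ⊢
  exact ⟨hn.1, claim n hn.1 hn.2⟩

section minorant

lemma minorant_exists (K0 : ℕ) (P : ℝ → ℕ → ℝ → Prop)
    (hP : ∀ δ : ℝ, 0 < δ → ∃ k : ℕ, K0 ≤ k ∧ ∃ r : ℝ, 0 < r ∧ P δ k r)
    (hmonoδ : ∀ δ δ' k r, 0 < δ → δ ≤ δ' → P δ k r → P δ' k r)
    (hmonor : ∀ δ k r r', 0 < r' → r' ≤ r → P δ k r → P δ k r') :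
    ∃ δbar : ℝ, 0 < δbar ∧ ∃ kδ : ℝ → ℕ, ∃ vK : ℝ → ℝ,
      (∀ δ ∈ Set.Ioc (0:ℝ) δbar, K0 ≤ kδ δ) ∧
      ContinuousOn vK (Set.Ioc 0 δbar) ∧ StrictMonoOn vK (Set.Ioc 0 δbar) ∧
      (∀ δ ∈ Set.Ioc (0:ℝ) δbar, 0 < vK δ) ∧
      Tendsto vK (nhdsWithin 0 (Set.Ioi 0)) (nhds 0) ∧
      (∀ δ ∈ Set.Ioc (0:ℝ) δbar, P δ (kδ δ) (vK δ)) := by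
  set D : ℕ → ℝ := fun n => (1/2:ℝ)^n with hDdef
  have hDpos : ∀ n, 0 < D n := fun n => by positivity
  have hDanti : ∀ p q : ℕ, p ≤ q → D q ≤ D p := fun p q h =>
    pow_le_pow_of_le_one (by norm_num) (by norm_num) h
  have hPD : ∀ n : ℕ, ∃ k : ℕ, K0 ≤ k ∧ ∃ r : ℝ, 0 < r ∧ P (D (n+1)) k r :=
    fun n => hP (D (n+1)) (hDpos (n+1))
  choose kF hkF rF hrFpos hPF using hPD
  -- decreasing radii
  set r' : ℕ → ℝ := fun n => Nat.rec (min (rF 0) 1) (fun m ih => min (rF (m+1)) (ih / 2)) n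
    with hr'def
  have hr'succ : ∀ m, r' (m+1) = min (rF (m+1)) (r' m / 2) := fun m => rfl
  have hr'pos : ∀ m, 0 < r' m := by
    intro m
    induction m with
    | zero => exact lt_min (hrFpos 0) one_pos
    | succ m ih => rw [hr'succ]; exact lt_min (hrFpos (m+1)) (by linarith)
  have hr'le : ∀ m, r' m ≤ rF m := by
    intro m
    cases m with
    | zero => exact min_le_left _ _
    | succ m => rw [hr'succ]; exact min_le_left _ _
  have hr'half : ∀ m, r' (m+1) ≤ r' m / 2 := fun m => by rw [hr'succ]; exact min_le_right _ _
  -- slope sequence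
  set c : ℕ → ℝ := fun m => r' (m+1) * 2 ^ m with hcdef
  have hcpos : ∀ m, 0 < c m := fun m => by
    have := hr'pos (m+1); positivity
  have hcanti : ∀ p q : ℕ, p ≤ q → c q ≤ c p := by
    have hstep : ∀ m, c (m+1) ≤ c m := by
      intro m
      have h1 := hr'half (m+1)
      have h2 : (0:ℝ) < 2 ^ m := by positivity
      calc c (m+1) = r' (m+2) * (2^m * 2) := by rw [hcdef]; ring_nf
        _ ≤ r' (m+1) / 2 * (2^m * 2) := by gcongr
        _ = c m := by rw [hcdef]; ring
    exact fun p q h => antitone_nat_of_succ_le hstep h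
  -- index function
  set nIdx : ℝ → ℕ := fun s => sInf {n : ℕ | D (n+1) < s} with hnIdxdef
  have hSne : ∀ s : ℝ, 0 < s → {n : ℕ | D (n+1) < s}.Nonempty := by
    intro s hs
    obtain ⟨n, hn⟩ := exists_pow_lt_of_lt_one hs (by norm_num : (1/2:ℝ) < 1)
    exact ⟨n, lt_of_le_of_lt (hDanti n (n+1) (Nat.le_succ n)) hn⟩
  have hnIdx_mem : ∀ s : ℝ, 0 < s → D (nIdx s + 1) < s :=
    fun s hs => Nat.sInf_mem (hSne s hs)
  have hnIdx_anti : ∀ s s' : ℝ, 0 < s → s ≤ s' → nIdx s' ≤ nIdx s := by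
    intro s s' hs hss'
    exact Nat.sInf_le (lt_of_lt_of_le (hnIdx_mem s hs) hss')
  have hnIdx_ge : ∀ n : ℕ, n ≤ nIdx (D n) := by
    intro n
    refine le_csInf (hSne (D n) (hDpos n)) (fun m hm => ?_)
    by_contra hc
    push_neg at hc
    have hm' : D (m+1) < D n := hm
    have : D n ≤ D (m+1) := hDanti (m+1) n (by omega)
    linarith
  -- the density h
  set h : ℝ → ℝ := fun s => if 0 < s then c (nIdx s) else 0 with hhdef
  have hnn : ∀ s, 0 ≤ h s := by
    intro s
    show 0 ≤ (if 0 < s then c (nIdx s) else 0)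
    by_cases hs : 0 < s
    · rw [if_pos hs]; exact (hcpos _).le
    · rw [if_neg hs]
  have hpos : ∀ s : ℝ, 0 < s → 0 < h s := by
    intro s hs
    show 0 < (if 0 < s then c (nIdx s) else 0)
    rw [if_pos hs]; exact hcpos _
  have hmono : Monotone h := by
    intro s s' hss'
    by_cases h1 : 0 < s
    · have h2 : 0 < s' := lt_of_lt_of_le h1 hss'
      show (if 0 < s then c (nIdx s) else 0) ≤ (if 0 < s' then c (nIdx s') else 0)
      rw [if_pos h1, if_pos h2]
      exact hcanti _ _ (hnIdx_anti s s' h1 hss')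
    · show (if 0 < s then c (nIdx s) else 0) ≤ h s'
      rw [if_neg h1]
      exact hnn s'
  have hint : ∀ a b' : ℝ, IntervalIntegrable h volume a b' :=
    fun a b' => (hmono.monotoneOn _).intervalIntegrable
  set vK : ℝ → ℝ := fun x => ∫ s in (0:ℝ)..x, h s with hvKdef
  have hvKcont : Continuous vK := intervalIntegral.continuous_primitive hint 0
  have hvK0 : vK 0 = 0 := intervalIntegral.integral_same
  have hvKmono : ∀ p q : ℝ, 0 ≤ p → p < q → vK p < vK q := by
    intro p q hp hpq
    set m := (p+q)/2 with hmdef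
    have hm1 : p < m := by rw [hmdef]; linarith
    have hm2 : m < q := by rw [hmdef]; linarith
    have hm0 : 0 < m := lt_of_le_of_lt hp hm1
    have hadd : vK p + (∫ s in p..q, h s) = vK q :=
      intervalIntegral.integral_add_adjacent_intervals (hint 0 p) (hint p q)
    have e2 : (∫ s in p..m, h s) + (∫ s in m..q, h s) = ∫ s in p..q, h s :=
      intervalIntegral.integral_add_adjacent_intervals (hint p m) (hint m q)
    have e3 : 0 ≤ ∫ s in p..m, h s :=
      intervalIntegral.integral_nonneg hm1.le (fun u _ => hnn u)
    have e4 : (q - m) * h m ≤ ∫ s in m..q, h s := by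
      have := intervalIntegral.integral_mono_on hm2.le intervalIntegrable_const (hint m q)
        (fun s hs => hmono hs.1)
      rwa [intervalIntegral.integral_const, smul_eq_mul] at this
    have e5 : 0 < (q - m) * h m := mul_pos (by linarith) (hpos m hm0)
    linarith
  have hvKmono' : ∀ p q : ℝ, 0 ≤ p → p ≤ q → vK p ≤ vK q := by
    intro p q hp hpq
    rcases eq_or_lt_of_le hpq with hl | hl
    · rw [hl]
    · exact (hvKmono p q hp hl).le
  have hvKpos : ∀ δ : ℝ, 0 < δ → 0 < vK δ := by
    intro δ hδ
    have := hvKmono 0 δ le_rfl hδ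
    rwa [hvK0] at this
  have hvKle : ∀ (n : ℕ) (δ : ℝ), 0 < δ → δ ≤ D n → vK δ ≤ r' (n+1) := by
    intro n δ hδ hδn
    have h1 : vK δ ≤ vK (D n) := hvKmono' δ (D n) hδ.le hδn
    have h2 : vK (D n) ≤ (D n - 0) * h (D n) := by
      have := intervalIntegral.integral_mono_on (hDpos n).le (hint 0 (D n))
        intervalIntegrable_const (fun s hs => hmono hs.2)
      rwa [intervalIntegral.integral_const, smul_eq_mul] at this
    have h3 : h (D n) = c (nIdx (D n)) := if_pos (hDpos n)
    have h4 : c (nIdx (D n)) ≤ c n := hcanti _ _ (hnIdx_ge n)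
    have h5 : (D n - 0) * c n = r' (n+1) := by
      rw [hDdef, hcdef]
      simp only [sub_zero]
      rw [div_pow, one_pow]
      field_simp
    calc vK δ ≤ (D n - 0) * h (D n) := le_trans h1 h2
      _ = (D n - 0) * c (nIdx (D n)) := by rw [h3]
      _ ≤ (D n - 0) * c n := by
          have : (0:ℝ) ≤ D n - 0 := by have := hDpos n; linarith
          exact mul_le_mul_of_nonneg_left h4 this
      _ = r' (n+1) := h5
  refine ⟨1, one_pos, fun δ => kF (nIdx δ), vK, ?_, hvKcont.continuousOn, ?_, ?_, ?_, ?_⟩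
  · exact fun δ _ => hkF _
  · exact fun p hp q _ hpq => hvKmono p q hp.1.le hpq
  · exact fun δ hδ => hvKpos δ hδ.1
  · have := hvKcont.tendsto 0
    rw [hvK0] at this
    exact this.mono_left nhdsWithin_le_nhds
  · intro δ hδ
    obtain ⟨hδ0, hδ1⟩ := hδ
    set n := nIdx δ with hndef
    have hδle : δ ≤ D n := by
      rcases Nat.eq_zero_or_pos n with hn0 | hn0
      · rw [hn0]; simpa [hDdef] using hδ1
      · have hlt : n - 1 < sInf {m : ℕ | D (m+1) < δ} := by
          show n - 1 < nIdx δ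
          omega
        have hnm := Nat.notMem_of_lt_sInf hlt
        have heq : n - 1 + 1 = n := by omega
        have : ¬ D n < δ := by
          intro hcon
          exact hnm (by rw [Set.mem_setOf_eq, heq]; exact hcon)
        linarith [not_lt.1 this]
    have hvK1 : vK δ ≤ rF n := by
      have := hvKle n δ hδ0 hδle
      have h6 := hr'half n
      have h7 := hr'le n
      linarith [hr'pos n]
    have hp1 : P δ (kF n) (rF n) :=
      hmonoδ (D (n+1)) δ (kF n) (rF n) (hDpos (n+1)) (hnIdx_mem δ hδ0).le (hPF n)
    exact hmonor δ (kF n) (rF n) (vK δ) (hvKpos δ hδ0) hvK1 hp1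

end minorant



/-- **Lemma 1.** Under (A1)-(A2), there exist `δ̄_K > 0`, `k_δ ≥ t + d` and a continuous,
strictly increasing `v_K` with `v_K(δ) → 0` (all independent of `(x̃, x')`), such that for all
`δ ∈ (0, δ̄_K]`, every block `{F_K^{-1}(x^n, u^n) : a b^{k_δ} ≤ n < (a+1) b^{k_δ}}` with
`x^n ∈ B_{v_K(δ)}(x̃)` contains at least `b^t` points in `B_δ(x')`. -/
theorem invRos_block_hits_ball
    {d b t : ℕ} (hd : 0 < d) (hb : 2 ≤ b)
    (u : ℕ → Fin d → ℝ) (hu : IsTSeq b t u)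
    (κ : (Fin d → ℝ) → (Fin d → ℝ) → ℝ) (hκ : IsMarkovDensity κ)
    (hA1 : A1 κ) (Klow : ℝ) (hA2 : A2 κ Klow)
    (G : (Fin d → ℝ) → (Fin d → ℝ) → (Fin d → ℝ)) (hG : IsInvRos κ G) :
    ∃ δbar : ℝ, 0 < δbar ∧ ∃ kδ : ℝ → ℕ, ∃ vK : ℝ → ℝ,
      (∀ δ ∈ Set.Ioc (0:ℝ) δbar, t + d ≤ kδ δ) ∧
      ContinuousOn vK (Set.Ioc 0 δbar) ∧ StrictMonoOn vK (Set.Ioc 0 δbar) ∧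
      (∀ δ ∈ Set.Ioc (0:ℝ) δbar, 0 < vK δ) ∧
      Tendsto vK (nhdsWithin 0 (Set.Ioi 0)) (nhds 0) ∧
      ∀ δ ∈ Set.Ioc (0:ℝ) δbar, ∀ xt ∈ cube d, ∀ x' ∈ cube d, ∀ a : ℕ,
        ∀ xs : ℕ → Fin d → ℝ,
          (∀ n ∈ Finset.Ico (a * b ^ kδ δ) (a * b ^ kδ δ + b ^ kδ δ),
            xs n ∈ ball' (vK δ) xt) →
          b ^ t ≤ ((Finset.Ico (a * b ^ kδ δ) (a * b ^ kδ δ + b ^ kδ δ)).filter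
            (fun n => G (xs n) (u n) ∈ ball' δ x')).card := by
  set P : ℝ → ℕ → ℝ → Prop := fun δ k r =>
    ∀ xt ∈ cube d, ∀ x' ∈ cube d, ∀ a : ℕ, ∀ xs : ℕ → Fin d → ℝ,
      (∀ n ∈ Finset.Ico (a * b ^ k) (a * b ^ k + b ^ k), xs n ∈ ball' r xt) →
      b ^ t ≤ ((Finset.Ico (a * b ^ k) (a * b ^ k + b ^ k)).filter
        (fun n => G (xs n) (u n) ∈ ball' δ x')).card with hPdef
  have hP : ∀ δ : ℝ, 0 < δ → ∃ k : ℕ, t + d ≤ k ∧ ∃ r : ℝ, 0 < r ∧ P δ k r :=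
    fun δ hδ => main_delta hd hb u hu κ Klow hA2 G hG δ hδ
  have hmonoδ : ∀ δ δ' k r, 0 < δ → δ ≤ δ' → P δ k r → P δ' k r := by
    intro δ δ' k r _ hδδ' hp xt hxt x' hx' a xs hxs
    refine le_trans (hp xt hxt x' hx' a xs hxs) (Finset.card_le_card ?_)
    intro n hn
    rw [Finset.mem_filter] at hn ⊢
    exact ⟨hn.1, hn.2.1, le_trans hn.2.2 hδδ'⟩
  have hmonor : ∀ δ k r r', 0 < r' → r' ≤ r → P δ k r → P δ k r' := by
    intro δ k r r' _ hrr' hp xt hxt x' hx' a xs hxs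
    exact hp xt hxt x' hx' a xs (fun n hn => ⟨(hxs n hn).1, le_trans (hxs n hn).2 hrr'⟩)
  obtain ⟨δbar, hδbar, kδ, vK, h1, h2, h3, h4, h5, h6⟩ :=
    minorant_exists (t + d) P hP hmonoδ hmonor
  exact ⟨δbar, hδbar, kδ, vK, h1, h2, h3, h4, h5, fun δ hδ => h6 δ hδ⟩
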